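/- A lattice path x ∈ L(n₁,...,n_k;n) has complexity index at most 2 if and only if for each i the minimal substring γᵢ(x) of its integer-string containing all occurrences of i, the family (γ₁(x),...,γ_k(x)) is nested: any two such substrings either have empty intersection or one contains the other. -/

import Mathlib

/-- Number of alternations (changes of letter) along a word. -/
def altCount : List ℕ → ℕ
  | [] => 0
  | [_] => 0
  | a :: b :: rest => (if a = b then 0 else 1) + altCount (b :: rest)

/-- The individual complexity index `c_{ab}` of a word. -/
def complexityIdx (w : List ℕ) (a b : ℕ) : ℕ :=
  altCount (w.filter (fun c => c = a ∨ c = b))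

/-- The set of positions at which the letter `a` occurs in `w`. -/
def occPositions (w : List ℕ) (a : ℕ) : Set ℕ :=
  {p | ∃ h : p < w.length, w.get ⟨p, h⟩ = a}

/-- Position of the first occurrence of `a` (start of the minimal substring `γ_a`). -/
noncomputable def firstOcc (w : List ℕ) (a : ℕ) : ℕ := sInf (occPositions w a)

/-- Position of the last occurrence of `a` (end of the minimal substring `γ_a`). -/
noncomputable def lastOcc (w : List ℕ) (a : ℕ) : ℕ := sSup (occPositions w a)

open List (Sublist)
local infixl:50 " <+ " => List.Sublist

lemma altCount_cons_cons (a b : ℕ) (l : List ℕ) :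
    altCount (a :: b :: l) = (if a = b then 0 else 1) + altCount (b :: l) := rfl

lemma altCount_le_cons (a : ℕ) (l : List ℕ) : altCount l ≤ altCount (a :: l) := by
  cases l with
  | nil => simp [altCount]
  | cons b t => rw [altCount_cons_cons]; omega

lemma altCount_cons_le (a b : ℕ) (l : List ℕ) :
    altCount (a :: l) ≤ (if a = b then 0 else 1) + altCount (b :: l) := by
  cases l with
  | nil => simp [altCount]
  | cons c t =>
    rw [altCount_cons_cons, altCount_cons_cons]
    split_ifs <;> omega

lemma altCount_cons_mono {s l : List ℕ} (h : s <+ l) :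
    ∀ a, altCount (a :: s) ≤ altCount (a :: l) := by
  induction h with
  | slnil => intro a; exact le_refl _
  | @cons l₁ l₂ b h ih =>
    intro a
    refine le_trans (ih a) (le_trans (altCount_cons_le a b l₂) ?_)
    rw [altCount_cons_cons]
  | @cons_cons l₁ l₂ b h ih =>
    intro a
    rw [altCount_cons_cons, altCount_cons_cons]
    exact Nat.add_le_add_left (ih b) _

lemma altCount_sublist {s l : List ℕ} (h : s <+ l) : altCount s ≤ altCount l := by
  induction h with
  | slnil => exact le_refl _
  | @cons l₁ l₂ b h ih => exact le_trans ih (altCount_le_cons b l₂)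
  | @cons_cons l₁ l₂ b h ih => exact altCount_cons_mono h b

lemma altCount_const {l : List ℕ} {c : ℕ} (h : ∀ x ∈ l, x = c) : altCount l = 0 := by
  induction l with
  | nil => rfl
  | cons a t ih =>
    cases t with
    | nil => rfl
    | cons b r =>
      rw [altCount_cons_cons]
      have ha := h a (by simp)
      have hb := h b (by simp)
      rw [if_pos (by omega), ih (fun x hx => h x (List.mem_cons_of_mem _ hx))]

lemma exists_chain : ∀ (l : List ℕ) (a : ℕ), ∃ s, (a :: s) <+ (a :: l) ∧
    (a :: s).Chain' (· ≠ ·) ∧ altCount (a :: l) + 1 ≤ (a :: s).length := by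
  intro l
  induction l with
  | nil => intro a; exact ⟨[], List.Sublist.refl _, List.isChain_singleton _, by simp [altCount]⟩
  | cons b t ih =>
    intro a
    obtain ⟨s, hs, hc, hl⟩ := ih b
    by_cases h : a = b
    · subst h
      refine ⟨s, hs.trans (List.sublist_cons_self a _), hc, ?_⟩
      rw [altCount_cons_cons, if_pos rfl]; omega
    · refine ⟨b :: s, hs.cons₂ a, List.isChain_cons_cons.mpr ⟨h, hc⟩, ?_⟩
      rw [altCount_cons_cons, if_neg h]
      simp only [List.length_cons] at hl ⊢
      omega

lemma exists_four {l : List ℕ} (h : 3 ≤ altCount l) :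
    ∃ a b c d, [a, b, c, d] <+ l ∧ a ≠ b ∧ b ≠ c ∧ c ≠ d := by
  match l with
  | [] => simp [altCount] at h
  | a :: t =>
    obtain ⟨s, hs, hc, hl⟩ := exists_chain t a
    match s with
    | [] => simp at hl; omega
    | [b] => simp at hl; omega
    | [b, c] => simp at hl; omega
    | b :: c :: d :: r =>
      refine ⟨a, b, c, d, ?_, ?_, ?_, ?_⟩
      · exact (((List.nil_sublist r).cons₂ d |>.cons₂ c |>.cons₂ b |>.cons₂ a)).trans hs
      · exact (List.isChain_cons_cons.mp hc).1
      · exact (List.isChain_cons_cons.mp (List.isChain_cons_cons.mp hc).2).1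
      · exact (List.isChain_cons_cons.mp (List.isChain_cons_cons.mp (List.isChain_cons_cons.mp hc).2).2).1





lemma occ_bddAbove (w : List ℕ) (a : ℕ) : BddAbove (occPositions w a) :=
  ⟨w.length, fun _ hp => le_of_lt hp.1⟩

lemma firstOcc_le {w : List ℕ} {a p : ℕ} (h : p ∈ occPositions w a) : firstOcc w a ≤ p :=
  Nat.sInf_le h

lemma le_lastOcc {w : List ℕ} {a p : ℕ} (h : p ∈ occPositions w a) : p ≤ lastOcc w a :=
  le_csSup (occ_bddAbove w a) h

lemma occ_nonempty {w : List ℕ} {a : ℕ} (h : a ∈ w) : (occPositions w a).Nonempty := by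
  obtain ⟨n, hn⟩ := List.mem_iff_get.mp h
  exact ⟨n.1, n.isLt, by simpa using hn⟩

lemma firstOcc_mem {w : List ℕ} {a : ℕ} (h : a ∈ w) : firstOcc w a ∈ occPositions w a :=
  Nat.sInf_mem (occ_nonempty h)

lemma lastOcc_mem {w : List ℕ} {a : ℕ} (h : a ∈ w) : lastOcc w a ∈ occPositions w a :=
  Nat.sSup_mem (occ_nonempty h) (occ_bddAbove w a)

lemma occ_eq {w : List ℕ} {a b p : ℕ} (h1 : p ∈ occPositions w a)
    (h2 : p ∈ occPositions w b) : a = b := by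
  obtain ⟨h, e1⟩ := h1
  obtain ⟨h', e2⟩ := h2
  rw [← e1, ← e2]

lemma sublist_pos {w : List ℕ} {a b c d : ℕ} (h : [a, b, c, d] <+ w) :
    ∃ p1 p2 p3 p4, p1 < p2 ∧ p2 < p3 ∧ p3 < p4 ∧
      p1 ∈ occPositions w a ∧ p2 ∈ occPositions w b ∧
      p3 ∈ occPositions w c ∧ p4 ∈ occPositions w d := by
  obtain ⟨f, hf⟩ := List.sublist_iff_exists_fin_orderEmbedding_get_eq.mp h
  refine ⟨(f ⟨0, by norm_num⟩).1, (f ⟨1, by norm_num⟩).1, (f ⟨2, by norm_num⟩).1,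
    (f ⟨3, by norm_num⟩).1, ?_, ?_, ?_,
    ⟨(f ⟨0, by norm_num⟩).isLt, ?_⟩, ⟨(f ⟨1, by norm_num⟩).isLt, ?_⟩,
    ⟨(f ⟨2, by norm_num⟩).isLt, ?_⟩, ⟨(f ⟨3, by norm_num⟩).isLt, ?_⟩⟩
  · exact f.strictMono (Fin.mk_lt_mk.mpr (by norm_num))
  · exact f.strictMono (Fin.mk_lt_mk.mpr (by norm_num))
  · exact f.strictMono (Fin.mk_lt_mk.mpr (by norm_num))
  · simpa using (hf ⟨0, by norm_num⟩).symm
  · simpa using (hf ⟨1, by norm_num⟩).symm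
  · simpa using (hf ⟨2, by norm_num⟩).symm
  · simpa using (hf ⟨3, by norm_num⟩).symm

lemma pos_sublist {w : List ℕ} {a b c d p1 p2 p3 p4 : ℕ}
    (h12 : p1 < p2) (h23 : p2 < p3) (h34 : p3 < p4)
    (m1 : p1 ∈ occPositions w a) (m2 : p2 ∈ occPositions w b)
    (m3 : p3 ∈ occPositions w c) (m4 : p4 ∈ occPositions w d) :
    [a, b, c, d] <+ w := by
  obtain ⟨hl1, e1⟩ := m1
  obtain ⟨hl2, e2⟩ := m2
  obtain ⟨hl3, e3⟩ := m3
  obtain ⟨hl4, e4⟩ := m4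
  apply List.sublist_iff_exists_orderEmbedding_getElem?_eq.mpr
  refine ⟨OrderEmbedding.ofStrictMono
    (fun n => if n = 0 then p1 else if n = 1 then p2 else if n = 2 then p3 else
      if n = 3 then p4 else n + w.length) ?_, ?_⟩
  · intro n m hnm
    dsimp only
    split_ifs <;> omega
  · intro ix
    match ix with
    | 0 => show _ = w[p1]?; simp [List.getElem?_eq_getElem hl1, ← e1]
    | 1 => show _ = w[p2]?; simp [List.getElem?_eq_getElem hl2, ← e2]
    | 2 => show _ = w[p3]?; simp [List.getElem?_eq_getElem hl3, ← e3]
    | 3 => show _ = w[p4]?; simp [List.getElem?_eq_getElem hl4, ← e4]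
    | (n + 4) =>
      show (none : Option ℕ) = w[n + 4 + w.length]?
      rw [List.getElem?_eq_none_iff.mpr (by omega)]

lemma three_le_complexityIdx {w : List ℕ} {i j a b : ℕ} (hab : a ≠ b)
    (hmem : (a = i ∧ b = j) ∨ (a = j ∧ b = i)) (h : [a, b, a, b] <+ w) :
    3 ≤ complexityIdx w i j := by
  unfold complexityIdx
  have hall : ∀ x ∈ [a, b, a, b], x = i ∨ x = j := by
    intro x hx
    simp only [List.mem_cons, List.not_mem_nil, or_false] at hx
    rcases hmem with ⟨rfl, rfl⟩ | ⟨rfl, rfl⟩ <;> tauto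
  have hsf : [a, b, a, b] <+ w.filter (fun c => c = i ∨ c = j) := by
    have h2 := h.filter (fun c => decide (c = i ∨ c = j))
    rwa [List.filter_eq_self.mpr (by intro x hx; simpa using hall x hx)] at h2
  have h3 : altCount [a, b, a, b] = 3 := by
    simp [altCount, if_neg hab, if_neg (Ne.symm hab)]
  calc 3 = altCount [a, b, a, b] := h3.symm
    _ ≤ _ := altCount_sublist hsf

lemma pattern_of_three {w : List ℕ} {i j : ℕ} (h : 3 ≤ complexityIdx w i j) :
    ∃ a b, ((a = i ∧ b = j) ∨ (a = j ∧ b = i)) ∧ a ≠ b ∧ [a, b, a, b] <+ w := by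
  unfold complexityIdx at h
  obtain ⟨a, b, c, d, hsub, h1, h2, h3⟩ := exists_four h
  have mem : ∀ x ∈ [a, b, c, d], x = i ∨ x = j := by
    intro x hx
    have hx2 := hsub.subset hx
    simpa using (List.mem_filter.mp hx2).2
  have ha := mem a (by simp)
  have hb := mem b (by simp)
  have hcm := mem c (by simp)
  have hdm := mem d (by simp)
  have hca : c = a := by rcases ha with h' | h' <;> rcases hb with h'' | h'' <;>
    rcases hcm with h''' | h''' <;> omega
  have hdb : d = b := by rcases ha with h' | h' <;> rcases hb with h'' | h'' <;>
    rcases hdm with h''' | h''' <;> omega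
  rw [hca, hdb] at hsub
  refine ⟨a, b, ?_, h1, hsub.trans List.filter_sublist⟩
  rcases ha with h' | h' <;> rcases hb with h'' | h'' <;> omega

lemma no_pattern {w : List ℕ} {i j : ℕ}
    (cfg : lastOcc w i < firstOcc w j ∨ lastOcc w j < firstOcc w i ∨
      (firstOcc w i ≤ firstOcc w j ∧ lastOcc w j ≤ lastOcc w i ∧
        ∀ p ∈ occPositions w i, p < firstOcc w j ∨ lastOcc w j < p) ∨
      (firstOcc w j ≤ firstOcc w i ∧ lastOcc w i ≤ lastOcc w j ∧
        ∀ p ∈ occPositions w j, p < firstOcc w i ∨ lastOcc w i < p))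
    {p1 p2 p3 p4 : ℕ} (h12 : p1 < p2) (h23 : p2 < p3) (h34 : p3 < p4)
    (m1 : p1 ∈ occPositions w i) (m2 : p2 ∈ occPositions w j)
    (m3 : p3 ∈ occPositions w i) (m4 : p4 ∈ occPositions w j) : False := by
  rcases cfg with h | h | ⟨_, _, h⟩ | ⟨_, _, h⟩
  · have := le_lastOcc m3; have := firstOcc_le m2; omega
  · have := le_lastOcc m2; have := firstOcc_le m1; omega
  · rcases h p3 m3 with h' | h'
    · have := firstOcc_le m2; omega
    · have := le_lastOcc m4; omega
  · rcases h p2 m2 with h' | h'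
    · have := firstOcc_le m1; omega
    · have := le_lastOcc m3; omega

lemma forward_half {w : List ℕ} {i j : ℕ} (hij : i ≠ j) (hi : i ∈ w) (hj : j ∈ w)
    (hf : firstOcc w i < firstOcc w j) (hc : complexityIdx w i j ≤ 2) :
    lastOcc w i < firstOcc w j ∨
    (firstOcc w i ≤ firstOcc w j ∧ lastOcc w j ≤ lastOcc w i ∧
      ∀ p ∈ occPositions w i, p < firstOcc w j ∨ lastOcc w j < p) := by
  have fim := firstOcc_mem hi
  have fjm := firstOcc_mem hj
  have lim := lastOcc_mem hi
  have ljm := lastOcc_mem hj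
  have no4 : ∀ p1 p2 p3 p4 : ℕ, p1 < p2 → p2 < p3 → p3 < p4 →
      p1 ∈ occPositions w i → p2 ∈ occPositions w j →
      p3 ∈ occPositions w i → p4 ∈ occPositions w j → False := by
    intro p1 p2 p3 p4 h12 h23 h34 m1 m2 m3 m4
    have h3 := three_le_complexityIdx hij (Or.inl ⟨rfl, rfl⟩)
      (pos_sublist h12 h23 h34 m1 m2 m3 m4)
    omega
  by_cases h1 : lastOcc w i < firstOcc w j
  · exact Or.inl h1
  push_neg at h1
  have hfl : firstOcc w j < lastOcc w i := by
    have : firstOcc w j ≠ lastOcc w i := fun h => hij.symm (occ_eq (h ▸ fjm) lim)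
    omega
  have hll : lastOcc w i ≠ lastOcc w j := fun h => hij (occ_eq lim (h ▸ ljm))
  by_cases h2 : lastOcc w i < lastOcc w j
  · exact absurd (no4 _ _ _ _ hf hfl h2 fim fjm lim ljm) (by simp)
  · push_neg at h2
    have h2' : lastOcc w j < lastOcc w i := by omega
    refine Or.inr ⟨le_of_lt hf, le_of_lt h2', ?_⟩
    intro p hp
    by_contra hcon
    push_neg at hcon
    obtain ⟨hc1, hc2⟩ := hcon
    have hne1 : p ≠ firstOcc w j := fun h => hij (occ_eq hp (h ▸ fjm))
    have hne2 : p ≠ lastOcc w j := fun h => hij (occ_eq hp (h ▸ ljm))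
    exact no4 _ _ _ _ hf (by omega) (by omega : p < lastOcc w j) fim fjm hp ljm


/-- An integer-string has complexity index at most `2` if and only if the family of
minimal substrings `γ_i` (the interval from the first to the last occurrence of `i`)
is nested: for any two letters `i ≠ j`, the substrings `γ_i` and `γ_j` either have
empty intersection, or one of them contains the other (the inner one then containing
no occurrence of the outer letter, i.e. the occurrences are nested as substrings). -/
theorem complexity_le_two_iff_nested (w : List ℕ) :
    (∀ i j : ℕ, i ≠ j → complexityIdx w i j ≤ 2) ↔
    (∀ i j : ℕ, i ≠ j → i ∈ w → j ∈ w →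
      (lastOcc w i < firstOcc w j ∨ lastOcc w j < firstOcc w i ∨
       (firstOcc w i ≤ firstOcc w j ∧ lastOcc w j ≤ lastOcc w i ∧
         ∀ p ∈ occPositions w i, p < firstOcc w j ∨ lastOcc w j < p) ∨
       (firstOcc w j ≤ firstOcc w i ∧ lastOcc w i ≤ lastOcc w j ∧
         ∀ p ∈ occPositions w j, p < firstOcc w i ∨ lastOcc w i < p))) := by

  constructor
  · intro H i j hij hi hj
    have hne : firstOcc w i ≠ firstOcc w j :=
      fun h => hij (occ_eq (firstOcc_mem hi) (h ▸ firstOcc_mem hj))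
    rcases lt_or_gt_of_ne hne with hf | hf
    · rcases forward_half hij hi hj hf (H i j hij) with h | h
      · exact Or.inl h
      · exact Or.inr (Or.inr (Or.inl h))
    · rcases forward_half hij.symm hj hi hf (H j i hij.symm) with h | h
      · exact Or.inr (Or.inl h)
      · exact Or.inr (Or.inr (Or.inr h))
  · intro H i j hij
    by_cases hi : i ∈ w
    · by_cases hj : j ∈ w
      · by_contra hc
        push_neg at hc
        obtain ⟨a, b, hab', hab, hsub⟩ := pattern_of_three (show 3 ≤ complexityIdx w i j by omega)
        obtain ⟨p1, p2, p3, p4, h12, h23, h34, m1, m2, m3, m4⟩ := sublist_pos hsub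
        have cfg := H i j hij hi hj
        rcases hab' with ⟨rfl, rfl⟩ | ⟨rfl, rfl⟩
        · exact no_pattern cfg h12 h23 h34 m1 m2 m3 m4
        · exact no_pattern (by tauto) h12 h23 h34 m1 m2 m3 m4
      · have : ∀ x ∈ w.filter (fun c => decide (c = i ∨ c = j)), x = i := by
          intro x hx
          obtain ⟨hxw, hxp⟩ := List.mem_filter.mp hx
          simp only [decide_eq_true_eq] at hxp
          rcases hxp with rfl | rfl
          · rfl
          · exact absurd hxw hj
        unfold complexityIdx
        rw [altCount_const this]
        omega
    · have : ∀ x ∈ w.filter (fun c => decide (c = i ∨ c = j)), x = j := by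
        intro x hx
        obtain ⟨hxw, hxp⟩ := List.mem_filter.mp hx
        simp only [decide_eq_true_eq] at hxp
        rcases hxp with rfl | rfl
        · exact absurd hxw hi
        · rfl
      unfold complexityIdx
      rw [altCount_const this]
      omega
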